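/- Fix δ > 0 and r₀ ∈ (0,1). For each integer n ≥ 1 let S_n : [0,1) → ℝ be a differentiable non-decreasing function with S_n(r₀) ≥ n^{2/δ}. Then the set E = { r ∈ [r₀, 1) : S_n′(r) ≥ S_n(r)^{1+δ}·(1−r²)^{−1} for some n } has finite hyperbolic measure; in fact ∫_E (1−r²)^{−1} dr ≤ π²/(6δ). -/

import Mathlib

open MeasureTheory Real Set
open scoped ENNReal

/-- Borel–Nevanlinna type growth lemma (paper's Claim 1): the set of radii where some
`S n` grows faster than `S n ^ (1+δ) / (1-r²)` has hyperbolic measure at most `π²/(6δ)`. -/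
lemma aux_ftc {Φ h : ℝ → ℝ} (hΦ : Monotone Φ) {a b c : ℝ} (hbc : b < c)
    (hd : ∀ r ∈ Set.Ioo a b, HasDerivAt Φ (h r) r) :
    ∫⁻ r in Set.Ioo a b, ENNReal.ofReal (h r) ≤ ENNReal.ofReal (Φ c - Φ a) := by
  set ν := hΦ.stieltjesFunction.measure with hν
  have h1 : ∀ᵐ x ∂volume, HasDerivAt Φ ((ν.rnDeriv volume x).toReal) x := hΦ.ae_hasDerivAt
  calc ∫⁻ r in Set.Ioo a b, ENNReal.ofReal (h r)
      = ∫⁻ r in Set.Ioo a b, ENNReal.ofReal ((ν.rnDeriv volume r).toReal) := by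
        apply lintegral_congr_ae
        refine (ae_restrict_iff' measurableSet_Ioo).2 ?_
        filter_upwards [h1] with x hx hmem
        rw [(hd x hmem).unique hx]
    _ ≤ ∫⁻ r in Set.Ioo a b, ν.rnDeriv volume r :=
        lintegral_mono fun r => ENNReal.ofReal_toReal_le
    _ ≤ ν (Set.Ioo a b) := Measure.setLIntegral_rnDeriv_le _
    _ ≤ ν (Set.Ioc a b) := measure_mono Set.Ioo_subset_Ioc_self
    _ = ENNReal.ofReal (hΦ.stieltjesFunction b - hΦ.stieltjesFunction a) :=
        StieltjesFunction.measure_Ioc _ _ _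
    _ ≤ ENNReal.ofReal (Φ c - Φ a) := by
        apply ENNReal.ofReal_le_ofReal
        have h2 : hΦ.stieltjesFunction b ≤ Φ c := by
          rw [hΦ.stieltjesFunction_eq]; exact hΦ.rightLim_le hbc
        have h3 : Φ a ≤ hΦ.stieltjesFunction a := by
          rw [hΦ.stieltjesFunction_eq]; exact hΦ.le_rightLim le_rfl
        linarith

theorem stmt_0 (δ r₀ : ℝ) (hδ : 0 < δ) (hr₀ : r₀ ∈ Ioo (0:ℝ) 1)
    (S : ℕ → ℝ → ℝ)
    (hdiff : ∀ n : ℕ, 1 ≤ n → ∀ r ∈ Ico (0:ℝ) 1, DifferentiableAt ℝ (S n) r)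
    (hmono : ∀ n : ℕ, 1 ≤ n → MonotoneOn (S n) (Ico (0:ℝ) 1))
    (hgrow : ∀ n : ℕ, 1 ≤ n → (n : ℝ) ^ ((2:ℝ) / δ) ≤ S n r₀) :
    (volume.withDensity fun r : ℝ => ENNReal.ofReal ((1 - r ^ 2)⁻¹))
        {r : ℝ | r ∈ Ico r₀ 1 ∧
          ∃ n : ℕ, 1 ≤ n ∧ (S n r) ^ ((1:ℝ) + δ) * (1 - r ^ 2)⁻¹ ≤ deriv (S n) r}
      ≤ ENNReal.ofReal (π ^ 2 / (6 * δ)) := by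
  set w : ℝ → ℝ≥0∞ := fun r => ENNReal.ofReal ((1 - r ^ 2)⁻¹) with hw
  set μ := volume.withDensity w with hμdef
  set G : ℕ → Set ℝ := fun n =>
    {r | r ∈ Ico r₀ 1 ∧ 1 ≤ n ∧ (S n r) ^ ((1:ℝ) + δ) * (1 - r ^ 2)⁻¹ ≤ deriv (S n) r}
    with hGdef
  have hIcosub : Ico r₀ 1 ⊆ Ico (0:ℝ) 1 := Ico_subset_Ico hr₀.1.le le_rfl
  -- key bound for each n
  have key : ∀ n : ℕ, μ (G n) ≤ ENNReal.ofReal (1/δ * (1/(n:ℝ)^2)) := by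
    intro n
    rcases Nat.eq_zero_or_pos n with hn0 | hn
    · have : G n = ∅ := by
        ext r; simp [hGdef, hn0]
      simp [this]
    -- now 1 ≤ n
    have hn1 : (1:ℝ) ≤ (n:ℝ) := by exact_mod_cast hn
    set T := S n with hT
    -- basic facts
    have hT1 : ∀ r ∈ Ico r₀ 1, (1:ℝ) ≤ T r := by
      intro r hr
      have h0 : (1:ℝ) ≤ (n:ℝ) ^ ((2:ℝ)/δ) :=
        Real.one_le_rpow hn1 (by positivity)
      have h1 : T r₀ ≤ T r :=
        hmono n hn ⟨hr₀.1.le, hr₀.2⟩ (hIcosub hr) hr.1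
      have := hgrow n hn
      linarith
    have hTpos : ∀ r ∈ Ico r₀ 1, (0:ℝ) < T r := fun r hr => lt_of_lt_of_le one_pos (hT1 r hr)
    -- the auxiliary monotone function
    set φ : ℝ → ℝ := fun r => -(1/δ) * T r ^ (-δ) with hφdef
    have hφmono : ∀ x ∈ Ico r₀ 1, ∀ y ∈ Ico r₀ 1, x ≤ y → φ x ≤ φ y := by
      intro x hx y hy hxy
      have h1 : T x ≤ T y := hmono n hn (hIcosub hx) (hIcosub hy) hxy
      have h2 : T y ^ (-δ) ≤ T x ^ (-δ) :=
        Real.rpow_le_rpow_of_nonpos (hTpos x hx) h1 (by linarith)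
      have h3 : (0:ℝ) ≤ 1/δ := by positivity
      simp only [hφdef]
      nlinarith [mul_le_mul_of_nonneg_left h2 h3]
    have hφle : ∀ r ∈ Ico r₀ 1, φ r ≤ 0 := by
      intro r hr
      have : (0:ℝ) < T r ^ (-δ) := Real.rpow_pos_of_pos (hTpos r hr) _
      have h3 : (0:ℝ) < 1/δ := by positivity
      simp only [hφdef]
      nlinarith
    -- global monotone extension
    set L : ℝ := sSup (φ '' Ico r₀ 1) with hLdef
    have hbdd : BddAbove (φ '' Ico r₀ 1) :=
      ⟨0, by rintro _ ⟨r, hr, rfl⟩; exact hφle r hr⟩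
    have hLle : ∀ r ∈ Ico r₀ 1, φ r ≤ L := fun r hr => le_csSup hbdd ⟨r, hr, rfl⟩
    have hL0 : L ≤ 0 := csSup_le (⟨φ r₀, ⟨r₀, ⟨le_rfl, hr₀.2⟩, rfl⟩⟩)
      (by rintro _ ⟨r, hr, rfl⟩; exact hφle r hr)
    set Φ : ℝ → ℝ := fun r => if r < 1 then φ (max r₀ r) else L with hΦdef
    have hmaxmem : ∀ r : ℝ, r < 1 → max r₀ r ∈ Ico r₀ 1 :=
      fun r hr => ⟨le_max_left _ _, max_lt hr₀.2 hr⟩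
    have hΦmono : Monotone Φ := by
      intro x y hxy
      simp only [hΦdef]
      by_cases hy1 : y < 1
      · have hx1 : x < 1 := lt_of_le_of_lt hxy hy1
        rw [if_pos hx1, if_pos hy1]
        exact hφmono _ (hmaxmem x hx1) _ (hmaxmem y hy1) (max_le_max le_rfl hxy)
      · rw [if_neg hy1]
        by_cases hx1 : x < 1
        · rw [if_pos hx1]; exact hLle _ (hmaxmem x hx1)
        · rw [if_neg hx1]
    -- derivative of Φ on Ioo r₀ 1
    set h : ℝ → ℝ := fun r => deriv T r * T r ^ (-(1+δ)) with hhdef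
    have hΦderiv : ∀ r ∈ Ioo r₀ 1, HasDerivAt Φ (h r) r := by
      intro r hr
      have hrIco : r ∈ Ico r₀ 1 := ⟨hr.1.le, hr.2⟩
      have hTd : HasDerivAt T (deriv T r) r :=
        (hdiff n hn r (hIcosub hrIco)).hasDerivAt
      have h1 : HasDerivAt (fun x => T x ^ (-δ))
          (deriv T r * (-δ) * T r ^ (-δ - 1)) r :=
        hTd.rpow_const (Or.inl (ne_of_gt (hTpos r hrIco)))
      have h2 : HasDerivAt (fun x => -(1/δ) * T x ^ (-δ))
          (-(1/δ) * (deriv T r * (-δ) * T r ^ (-δ - 1))) r := h1.const_mul _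
      have heq : -(1/δ) * (deriv T r * (-δ) * T r ^ (-δ - 1)) = h r := by
        have : -δ - 1 = -(1+δ) := by ring
        rw [this, hhdef]
        field_simp
      rw [heq] at h2
      -- Φ agrees with the function near r
      have hev : Φ =ᶠ[nhds r] (fun x => -(1/δ) * T x ^ (-δ)) := by
        have hmem : Ioo r₀ 1 ∈ nhds r := isOpen_Ioo.mem_nhds hr
        filter_upwards [hmem] with x hx
        simp only [hΦdef, if_pos hx.2, max_eq_right hx.1.le, hφdef]
      exact h2.congr_of_eventuallyEq hev
    -- the FTC bound
    have hftc : ∫⁻ r in Ioo r₀ 1, ENNReal.ofReal (h r) ≤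
        ENNReal.ofReal (1/δ * (1/(n:ℝ)^2)) := by
      refine le_trans (aux_ftc hΦmono (show (1:ℝ) < 2 by norm_num) hΦderiv) ?_
      apply ENNReal.ofReal_le_ofReal
      have hΦ2 : Φ 2 = L := by rw [hΦdef]; norm_num
      have hΦr₀ : Φ r₀ = φ r₀ := by
        simp only [hΦdef, if_pos hr₀.2, max_self]
      rw [hΦ2, hΦr₀]
      -- φ r₀ ≥ -(1/δ) * (1/n²)
      have hnpos : (0:ℝ) < n := by linarith
      have h1 : (n:ℝ) ^ ((2:ℝ)/δ) ≤ T r₀ := hgrow n hn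
      have h2 : T r₀ ^ (-δ) ≤ ((n:ℝ) ^ ((2:ℝ)/δ)) ^ (-δ) :=
        Real.rpow_le_rpow_of_nonpos (Real.rpow_pos_of_pos hnpos _) h1 (by linarith)
      have h3 : ((n:ℝ) ^ ((2:ℝ)/δ)) ^ (-δ) = (n:ℝ) ^ ((-2:ℝ)) := by
        rw [← Real.rpow_mul hnpos.le]
        congr 1
        field_simp
      have h4 : (n:ℝ) ^ ((-2:ℝ)) = 1/(n:ℝ)^2 := by
        rw [Real.rpow_neg hnpos.le, one_div]
        congr 1
        rw [Real.rpow_two]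
      have h5 : T r₀ ^ (-δ) ≤ 1/(n:ℝ)^2 := by rw [← h4, ← h3]; exact h2
      have h6 : (0:ℝ) < 1/δ := by positivity
      have : -(1/δ) * (1/(n:ℝ)^2) ≤ φ r₀ := by
        simp only [hφdef]
        nlinarith
      linarith
    -- measurability juggling
    have hScont : ContinuousOn T (Ico r₀ 1) := fun r hr =>
      (hdiff n hn r (hIcosub hr)).continuousAt.continuousWithinAt
    have hSae : AEMeasurable T (volume.restrict (Ico r₀ 1)) :=
      hScont.aemeasurable measurableSet_Ico
    set g : ℝ → ℝ := fun r => max 1 (hSae.mk T r) with hgdef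
    have hgm : Measurable g := measurable_const.max hSae.measurable_mk
    have hgeq : ∀ᵐ r ∂(volume.restrict (Ico r₀ 1)), T r = g r := by
      filter_upwards [hSae.ae_eq_mk, ae_restrict_mem measurableSet_Ico] with r h1 h2
      simp only [hgdef, ← h1, max_eq_right (hT1 r h2)]
    set E' : Set ℝ := Ico r₀ 1 ∩ {r | (g r) ^ ((1:ℝ) + δ) * (1 - r ^ 2)⁻¹ ≤ deriv T r}
      with hE'def
    have hgpow : (fun r => (g r) ^ ((1:ℝ) + δ)) =
        (fun r => Real.exp (Real.log (g r) * ((1:ℝ) + δ))) := by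
      funext r
      rw [Real.rpow_def_of_pos (lt_of_lt_of_le one_pos (le_max_left _ _))]
    have hE'meas : MeasurableSet E' := by
      apply measurableSet_Ico.inter
      apply measurableSet_le
      · apply Measurable.mul
        · rw [hgpow]
          exact (Real.measurable_exp.comp ((Real.measurable_log.comp hgm).mul_const _))
        · exact ((measurable_const.sub ((measurable_id.pow_const 2))).inv)
      · exact measurable_deriv T
    -- null set
    have htnull : volume {r | r ∈ Ico r₀ 1 ∧ T r ≠ g r} = 0 := by
      have h1 : volume.restrict (Ico r₀ 1) {r | T r ≠ g r} = 0 := hgeq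
      rw [Measure.restrict_apply' measurableSet_Ico] at h1
      refine measure_mono_null ?_ h1
      intro r hr; exact ⟨hr.2, hr.1⟩
    have hGsub : G n ⊆ E' ∪ {r | r ∈ Ico r₀ 1 ∧ T r ≠ g r} := by
      rintro r ⟨hr1, _, hr3⟩
      by_cases hc : T r = g r
      · left
        refine ⟨hr1, ?_⟩
        show (g r) ^ ((1:ℝ)+δ) * (1 - r^2)⁻¹ ≤ deriv T r
        rw [← hc]; exact hr3
      · right; exact ⟨hr1, hc⟩
    -- bound μ (G n)
    have hμnull : μ {r | r ∈ Ico r₀ 1 ∧ T r ≠ g r} = 0 :=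
      (withDensity_absolutelyContinuous volume w) htnull
    have hμE' : μ E' ≤ ∫⁻ r in Ico r₀ 1, ENNReal.ofReal (h r) := by
      rw [hμdef, withDensity_apply _ hE'meas]
      have hstep : ∫⁻ r in E', w r ≤ ∫⁻ r in E', ENNReal.ofReal (h r) := by
        apply lintegral_mono_ae
        have hmemE' : ∀ᵐ r ∂(volume.restrict E'), r ∈ E' := ae_restrict_mem hE'meas
        have hgeq' : ∀ᵐ r ∂(volume.restrict E'), T r = g r :=
          ae_mono (Measure.restrict_mono inter_subset_left le_rfl) hgeq
        filter_upwards [hmemE', hgeq'] with r hrE' hTg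
        obtain ⟨hrIco, hineq0⟩ := hrE'
        have hineq : g r ^ ((1:ℝ)+δ) * (1 - r^2)⁻¹ ≤ deriv T r := hineq0
        rw [← hTg] at hineq
        show ENNReal.ofReal ((1 - r ^ 2)⁻¹) ≤ ENNReal.ofReal (h r)
        apply ENNReal.ofReal_le_ofReal
        -- algebra
        have hTp : (0:ℝ) < T r := hTpos r hrIco
        have hXp : (0:ℝ) < T r ^ (-(1+δ)) := Real.rpow_pos_of_pos hTp _
        have hmul := mul_le_mul_of_nonneg_right hineq hXp.le
        have hcancel : T r ^ ((1:ℝ)+δ) * (1 - r^2)⁻¹ * T r ^ (-(1+δ))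
            = (1 - r^2)⁻¹ := by
          rw [mul_comm (T r ^ ((1:ℝ)+δ)) ((1 - r^2)⁻¹), mul_assoc,
            ← Real.rpow_add hTp, show (1:ℝ) + δ + -(1+δ) = 0 by ring,
            Real.rpow_zero, mul_one]
        rw [hcancel] at hmul
        exact hmul
      refine hstep.trans ?_
      exact lintegral_mono' (Measure.restrict_mono inter_subset_left le_rfl) le_rfl
    have hIco_le : ∫⁻ r in Ico r₀ 1, ENNReal.ofReal (h r) ≤
        ∫⁻ r in Ioo r₀ 1, ENNReal.ofReal (h r) := by
      have hsub2 : Ico r₀ 1 ⊆ {r₀} ∪ Ioo r₀ 1 := by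
        intro r hr
        rcases eq_or_lt_of_le hr.1 with heq | hlt
        · left; exact heq.symm
        · right; exact ⟨hlt, hr.2⟩
      calc ∫⁻ r in Ico r₀ 1, ENNReal.ofReal (h r)
          ≤ ∫⁻ r in ({r₀} ∪ Ioo r₀ 1), ENNReal.ofReal (h r) :=
            lintegral_mono' (Measure.restrict_mono hsub2 le_rfl) le_rfl
        _ ≤ ∫⁻ r, ENNReal.ofReal (h r) ∂(volume.restrict {r₀} + volume.restrict (Ioo r₀ 1)) :=
            lintegral_mono' (Measure.restrict_union_le _ _) le_rfl
        _ = (∫⁻ r in ({r₀} : Set ℝ), ENNReal.ofReal (h r))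
            + ∫⁻ r in Ioo r₀ 1, ENNReal.ofReal (h r) := lintegral_add_measure _ _ _
        _ = ∫⁻ r in Ioo r₀ 1, ENNReal.ofReal (h r) := by
            rw [setLIntegral_measure_zero _ _ (volume_singleton), zero_add]
    calc μ (G n) ≤ μ (E' ∪ {r | r ∈ Ico r₀ 1 ∧ T r ≠ g r}) := measure_mono hGsub
      _ ≤ μ E' + μ {r | r ∈ Ico r₀ 1 ∧ T r ≠ g r} := measure_union_le _ _
      _ = μ E' := by rw [hμnull, add_zero]
      _ ≤ ENNReal.ofReal (1/δ * (1/(n:ℝ)^2)) := hμE'.trans (hIco_le.trans hftc)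
  -- summation
  have hsubU : {r : ℝ | r ∈ Ico r₀ 1 ∧
      ∃ n : ℕ, 1 ≤ n ∧ (S n r) ^ ((1:ℝ) + δ) * (1 - r ^ 2)⁻¹ ≤ deriv (S n) r}
      ⊆ ⋃ n, G n := by
    rintro r ⟨hr, n, hn, hineq⟩
    exact mem_iUnion.2 ⟨n, hr, hn, hineq⟩
  have hsum : ∑' n : ℕ, ENNReal.ofReal (1/δ * (1/(n:ℝ)^2))
      = ENNReal.ofReal (π ^ 2 / (6 * δ)) := by
    have hterm : ∀ n : ℕ, ENNReal.ofReal (1/δ * (1/(n:ℝ)^2))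
        = ENNReal.ofReal (1/δ) * ENNReal.ofReal (1/(n:ℝ)^2) := fun n =>
      ENNReal.ofReal_mul (by positivity)
    simp_rw [hterm]
    rw [ENNReal.tsum_mul_left]
    have hs : (∑' n : ℕ, ENNReal.ofReal (1/(n:ℝ)^2)) = ENNReal.ofReal (π^2/6) := by
      rw [← ENNReal.ofReal_tsum_of_nonneg (fun n => by positivity) hasSum_zeta_two.summable,
        hasSum_zeta_two.tsum_eq]
    rw [hs, ← ENNReal.ofReal_mul (by positivity)]
    congr 1
    field_simp
  calc μ {r : ℝ | r ∈ Ico r₀ 1 ∧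
      ∃ n : ℕ, 1 ≤ n ∧ (S n r) ^ ((1:ℝ) + δ) * (1 - r ^ 2)⁻¹ ≤ deriv (S n) r}
      ≤ μ (⋃ n, G n) := measure_mono hsubU
    _ ≤ ∑' n, μ (G n) := measure_iUnion_le _
    _ ≤ ∑' n : ℕ, ENNReal.ofReal (1/δ * (1/(n:ℝ)^2)) := ENNReal.tsum_le_tsum key
    _ = ENNReal.ofReal (π ^ 2 / (6 * δ)) := hsum
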